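/- Let U ⊆ ℝ be an open interval containing 0 and let (Λ_k)_{k∈ℕ} be a family of real-analytic functions Λ_k : U → ℝ. If the elements of the sequence (Λ_k'(0))_{k∈ℕ} are ℚ-linearly independent, then for Lebesgue-almost every μ ∈ U the elements of the sequence (Λ_k(μ))_{k∈ℕ} are ℚ-linearly independent. -/

import Mathlib

/-- A sequence of real numbers is `ℚ`-linearly independent if every nontrivial
finite rational linear combination of its terms is nonzero. -/
def QLinIndep (a : ℕ → ℝ) : Prop :=
  ∀ N : ℕ, ∀ q : Fin N → ℚ, q ≠ 0 → ∑ k, (q k : ℝ) * a k ≠ 0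

/-- The zero set of a real-analytic function on a connected open set, which is
not identically zero (witnessed by a nonzero derivative at a point), is countable. -/
lemma countable_zero_set_of_analytic (U : Set ℝ) (hUopen : IsOpen U)
    (hUpre : IsPreconnected U) (f : ℝ → ℝ)
    (hf : ∀ x ∈ U, AnalyticAt ℝ f x) (x₀ : ℝ) (hx₀ : x₀ ∈ U)
    (hne : deriv f x₀ ≠ 0) :
    Set.Countable {x | x ∈ U ∧ f x = 0} := by
  have hAN : AnalyticOnNhd ℝ f U := hf
  have hnotzero : ¬ Set.EqOn f 0 U := by
    intro h
    apply hne
    have hev : f =ᶠ[nhds x₀] 0 :=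
      Filter.eventuallyEq_of_mem (hUopen.mem_nhds hx₀) h
    rw [hev.deriv_eq]
    exact deriv_const x₀ 0
  set Z : Set ℝ := {x | x ∈ U ∧ f x = 0} with hZ
  have hdisc : DiscreteTopology Z := by
    rw [discreteTopology_subtype_iff]
    intro x hx
    rcases (hf x hx.1).eventually_eq_zero_or_eventually_ne_zero with h | h
    · exact absurd (hAN.eqOn_zero_of_preconnected_of_eventuallyEq_zero hUpre hx.1 h) hnotzero
    · rw [Filter.inf_principal_eq_bot]
      filter_upwards [h] with y hy
      exact fun hyZ => hy hyZ.2
  have : Countable Z :=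
    (TopologicalSpace.separableSpace_iff_countable).1 inferInstance
  exact Set.countable_coe_iff.mp this

theorem ae_qLinIndep_of_analytic
    (U : Set ℝ) (hUopen : IsOpen U) (hUconn : U.OrdConnected)
    (hU0 : (0 : ℝ) ∈ U)
    (Λ : ℕ → ℝ → ℝ)
    (hanalytic : ∀ k, ∀ x ∈ U, AnalyticAt ℝ (Λ k) x)
    (hindep : QLinIndep (fun k => deriv (Λ k) 0)) :
    ∀ᵐ μ ∂MeasureTheory.volume, μ ∈ U → QLinIndep (fun k => Λ k μ) := by
  have hUpre : IsPreconnected U := hUconn.isPreconnected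
  -- the bad set for each (N, q)
  have key : ∀ (N : ℕ) (q : Fin N → ℚ), q ≠ 0 →
      MeasureTheory.volume {μ : ℝ | μ ∈ U ∧ ∑ k, (q k : ℝ) * Λ k μ = 0} = 0 := by
    intro N q hq
    set f : ℝ → ℝ := fun x => ∑ k, (q k : ℝ) * Λ k x with hf
    have hfa : ∀ x ∈ U, AnalyticAt ℝ f x := by
      intro x hx
      exact Finset.analyticAt_fun_sum _ fun k _ => (analyticAt_const.mul (hanalytic k x hx))
    have hderiv : HasDerivAt f (∑ k, (q k : ℝ) * deriv (Λ k) 0) 0 := by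
      apply HasDerivAt.fun_sum
      intro k _
      exact ((hanalytic k 0 hU0).differentiableAt.hasDerivAt).const_mul _
    have hdf : deriv f 0 = ∑ k, (q k : ℝ) * deriv (Λ k) 0 := hderiv.deriv
    have hne : deriv f 0 ≠ 0 := by
      rw [hdf]; exact hindep N q hq
    exact (countable_zero_set_of_analytic U hUopen hUpre f hfa 0 hU0 hne).measure_zero _
  rw [MeasureTheory.ae_iff]
  have hsub : {μ : ℝ | ¬(μ ∈ U → QLinIndep fun k => Λ k μ)} ⊆
      ⋃ N : ℕ, ⋃ q : Fin N → ℚ,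
        {μ : ℝ | q ≠ 0 ∧ μ ∈ U ∧ ∑ k, (q k : ℝ) * Λ k μ = 0} := by
    intro μ hμ
    simp only [Set.mem_setOf_eq, not_forall] at hμ
    obtain ⟨hμU, hbad⟩ := hμ
    unfold QLinIndep at hbad
    push_neg at hbad
    obtain ⟨N, q, hq, hsum⟩ := hbad
    exact Set.mem_iUnion.2 ⟨N, Set.mem_iUnion.2 ⟨q, hq, hμU, hsum⟩⟩
  have hnull : MeasureTheory.volume (⋃ N : ℕ, ⋃ q : Fin N → ℚ,
      {μ : ℝ | q ≠ 0 ∧ μ ∈ U ∧ ∑ k, (q k : ℝ) * Λ k μ = 0}) = 0 := by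
    apply MeasureTheory.measure_iUnion_null
    intro N
    apply MeasureTheory.measure_iUnion_null
    intro q
    by_cases hq : q = 0
    · simp [hq]
    · refine MeasureTheory.measure_mono_null ?_ (key N q hq)
      intro μ hμ
      simp only [Set.mem_setOf_eq] at hμ ⊢
      exact ⟨hμ.2.1, hμ.2.2⟩
  exact MeasureTheory.measure_mono_null hsub hnull
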